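/- For a connected symmetric directed graph G, the polytope P_G is simplicial if and only if the underlying undirected graph of G contains no even cycle. -/

import Mathlib

open Finset

/-- `ρ(e) = e_{i} - e_{j}` for an arrow `e = (i,j)`. -/
def rho {V : Type*} [DecidableEq V] (e : V × V) : V → ℝ :=
  fun k => (if k = e.1 then (1 : ℝ) else 0) - (if k = e.2 then (1 : ℝ) else 0)

/-- The polytope `P_G` associated with the arrow set `A` of a directed graph. -/
def polyG {V : Type*} [DecidableEq V] (A : Finset (V × V)) : Set (V → ℝ) :=
  convexHull ℝ (rho '' (A : Set (V × V)))

/-- Connectivity of the underlying undirected graph of the directed graph with arrow set `A`. -/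
def GConnected {V : Type*} [DecidableEq V] (A : Finset (V × V)) : Prop :=
  (SimpleGraph.fromRel (fun i j => (i, j) ∈ A)).Connected

/-- Cyclic successor on `Fin l`. -/
def succAt {l : ℕ} (h : 0 < l) (j : Fin l) : Fin l :=
  ⟨((j : ℕ) + 1) % l, Nat.mod_lt _ h⟩

/-- The data of a cycle in a directed graph on the vertex set `V`:
a list of at least two distinct vertices, cyclically ordered, together with, for each
edge of the cycle, a choice of direction (`ε j = true` means the arrow points forwards). -/
structure PreCycle (V : Type*) where
  l : ℕ
  two_le : 2 ≤ l
  v : Fin l → V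
  ε : Fin l → Bool
  inj : Function.Injective v

namespace PreCycle

variable {V : Type*}

theorem pos (C : PreCycle V) : 0 < C.l :=
  lt_of_lt_of_le Nat.zero_lt_two C.two_le

/-- The cyclically next index. -/
def nxt (C : PreCycle V) (j : Fin C.l) : Fin C.l := succAt C.pos j

/-- The arrow of the cycle corresponding to its `j`-th edge. -/
def arrow (C : PreCycle V) (j : Fin C.l) : V × V :=
  if C.ε j then (C.v j, C.v (C.nxt j)) else (C.v (C.nxt j), C.v j)

/-- `C` is a cycle in the directed graph with arrow set `A`. -/
def IsCycleIn [DecidableEq V] (C : PreCycle V) (A : Finset (V × V)) : Prop :=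
  (∀ j, C.arrow j ∈ A) ∧ Function.Injective C.arrow

/-- A cycle is homogeneous if it has as many forward arrows as backward arrows. -/
def Homogeneous (C : PreCycle V) : Prop :=
  2 * (Finset.univ.filter fun j => C.ε j = true).card = C.l

/-- A directed cycle: all arrows point in the direction of traversal. -/
def IsDirected (C : PreCycle V) : Prop := ∀ j, C.ε j = true

/-- The defining property of the function `μ_C` attached to a homogeneous cycle `C`
(here recorded as a function of the position along the cycle; since the vertices of the
cycle are distinct this is the same as a function on the cycle vertices):
it is nonnegative, decreases by `1` along forward arrows, increases by `1` along
backward arrows, and has minimum value `0`. -/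
def IsMu (C : PreCycle V) (μ : Fin C.l → ℤ) : Prop :=
  (∀ j, 0 ≤ μ j) ∧ (∀ j, μ (C.nxt j) = if C.ε j then μ j - 1 else μ j + 1) ∧ (∃ j, μ j = 0)

end PreCycle

/-- Every arrow of the directed graph with arrow set `A` lies in a directed cycle. -/
def EveryArrowInDirCycle {V : Type*} [DecidableEq V] (A : Finset (V × V)) : Prop :=
  ∀ e ∈ A, ∃ C : PreCycle V, C.IsCycleIn A ∧ C.IsDirected ∧ ∃ j, C.arrow j = e

/-- The dimension of a subset of `ℝ^V` (the dimension of its affine hull). -/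
noncomputable def pdim {V : Type*} (s : Set (V → ℝ)) : ℕ :=
  Module.finrank ℝ (vectorSpan ℝ s)

/-- `F` is a facet of the polytope `P`: a nonempty exposed face of codimension one. -/
def IsFacetOf {V : Type*} (F P : Set (V → ℝ)) : Prop :=
  IsExposed ℝ P F ∧ F.Nonempty ∧ pdim F + 1 = pdim P

/-- A polytope is simplicial if the vertices of every facet are affinely independent. -/
def Simplicial {V : Type*} (P : Set (V → ℝ)) : Prop :=
  ∀ F : Set (V → ℝ), IsFacetOf F P →
    AffineIndependent ℝ (fun x : (F.extremePoints ℝ) => (x : V → ℝ))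

/-- The lattice `ℤ^V ∩ {x : Σ x_i = 0}`, as a subset of `ℝ^V`. -/
def latticeSet (V : Type*) [Fintype V] : Set (V → ℝ) :=
  {x | (∀ i, ∃ z : ℤ, x i = (z : ℝ)) ∧ ∑ i, x i = 0}

/-- The set of integer points of `ℝ^V`. -/
def intLat (V : Type*) : Set (V → ℝ) :=
  {x | ∀ i, ∃ z : ℤ, x i = (z : ℝ)}

/-- `W` is a `ℤ`-basis of (the additive group generated by) `L`. -/
def IsZBasisOf {V : Type*} (W L : Set (V → ℝ)) : Prop :=
  W ⊆ L ∧ LinearIndependent ℤ (fun x : W => (x : V → ℝ)) ∧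
    L ⊆ (Submodule.span ℤ W : Set (V → ℝ))

/-- There is a directed path of length `n` from `i` to `j` in the directed graph `A`. -/
def HasDPath {V : Type*} (A : Finset (V × V)) (i j : V) (n : ℕ) : Prop :=
  ∃ f : Fin (n + 1) → V, f 0 = i ∧ f (Fin.last n) = j ∧
    ∀ k : Fin n, (f k.castSucc, f k.succ) ∈ A

/-- The underlying undirected graph of `A` contains an even cycle. -/
def HasEvenCycle {V : Type*} [DecidableEq V] (A : Finset (V × V)) : Prop :=
  ∃ C : PreCycle V, 3 ≤ C.l ∧ Even C.l ∧
    ∀ j, (C.v j, C.v (C.nxt j)) ∈ A ∨ (C.v (C.nxt j), C.v j) ∈ A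

/-- A subgraph is two-connected if it has at least two vertices and removing any single
vertex leaves it connected. -/
def TwoConn {W : Type*} (G : SimpleGraph W) (H : G.Subgraph) : Prop :=
  2 ≤ H.verts.ncard ∧ ∀ w : W, ((H.deleteVerts {w}).coe).Connected

/-- A two-connected component: a maximal two-connected subgraph. -/
def IsBlock {W : Type*} (G : SimpleGraph W) (H : G.Subgraph) : Prop :=
  TwoConn G H ∧ ∀ H' : G.Subgraph, TwoConn G H' → H ≤ H' → H' = H

/-- The subgraph consists of a single edge. -/
def IsSingleEdge {W : Type*} (G : SimpleGraph W) (H : G.Subgraph) : Prop :=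
  ∃ (a b : W) (h : G.Adj a b), H = G.subgraphOfAdj h

/-- The subgraph is an odd cycle. -/
def IsOddCycleSub {W : Type*} (G : SimpleGraph W) (H : G.Subgraph) : Prop :=
  ∃ (l : ℕ) (hl : 3 ≤ l) (v : Fin l → W), Odd l ∧ Function.Injective v ∧
    H.verts = Set.range v ∧
    ∀ x y : W, H.Adj x y ↔ ∃ j : Fin l,
      (x = v j ∧ y = v (succAt (by omega) j)) ∨ (y = v j ∧ x = v (succAt (by omega) j))

/-- The simple graph `G` contains no cycle of even length. -/
def NoEvenCycleSG {W : Type*} (G : SimpleGraph W) : Prop :=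
  ¬ ∃ (u : W) (w : G.Walk u u), w.IsCycle ∧ Even w.length


section Aux
variable {d : ℕ}


/-- The linear functional `x ↦ ∑ i, f i * x i`. -/
noncomputable def lw (f : Fin d → ℝ) : (Fin d → ℝ) →ₗ[ℝ] ℝ where
  toFun x := ∑ i, f i * x i
  map_add' x y := by simp [mul_add, Finset.sum_add_distrib]
  map_smul' c x := by simp [Finset.mul_sum]; ring_nf; simp [mul_comm, mul_left_comm]

lemma lw_apply (f x : Fin d → ℝ) : lw f x = ∑ i, f i * x i := rfl

lemma lw_rho (f : Fin d → ℝ) (e : Fin d × Fin d) : lw f (rho e) = f e.1 - f e.2 := by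
  simp only [lw_apply, rho, mul_sub, Finset.sum_sub_distrib]
  congr 1 <;> simp [mul_ite, Finset.sum_ite_eq', eq_comm]

noncomputable def lwC (f : Fin d → ℝ) : (Fin d → ℝ) →L[ℝ] ℝ :=
  LinearMap.toContinuousLinearMap (lw f)

lemma lwC_apply (f x : Fin d → ℝ) : lwC f x = ∑ i, f i * x i := rfl

lemma le_on_hull {s : Set (Fin d → ℝ)} {f : Fin d → ℝ} {c : ℝ}
    (h : ∀ y ∈ s, lw f y ≤ c) : ∀ x ∈ convexHull ℝ s, lw f x ≤ c := by
  intro x hx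
  have : convexHull ℝ s ⊆ {x | lw f x ≤ c} :=
    convexHull_min h (convex_halfSpace_le (LinearMap.isLinear (lw f)) c)
  exact this hx

lemma eq_on_hull {s : Set (Fin d → ℝ)} {f : Fin d → ℝ} {c : ℝ}
    (h : ∀ y ∈ s, lw f y = c) : ∀ x ∈ convexHull ℝ s, lw f x = c := by
  intro x hx
  have : convexHull ℝ s ⊆ {x | lw f x = c} :=
    convexHull_min (fun y hy => h y hy) (convex_hyperplane (LinearMap.isLinear (lw f)) c)
  exact this hx

lemma sum_rho (e : Fin d × Fin d) : lw (fun _ => 1) (rho e) = 0 := by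
  rw [lw_rho]; ring

/-- A point of the hull where a functional attains its max over the generators lies in the
hull of the maximizing generators. -/
lemma hull_face {s : Set (Fin d → ℝ)} {f : Fin d → ℝ} {c : ℝ}
    (hle : ∀ y ∈ s, lw f y ≤ c) {x : Fin d → ℝ} (hx : x ∈ convexHull ℝ s)
    (hxc : lw f x = c) : x ∈ convexHull ℝ {y ∈ s | lw f y = c} := by
  rw [_root_.convexHull_eq] at hx
  obtain ⟨ι, t, w, z, hw0, hw1, hzs, hcm⟩ := hx
  classical
  have hzero : ∀ i ∈ t, w i * (c - lw f (z i)) = 0 := by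
    have hsum : ∑ i ∈ t, w i * (c - lw f (z i)) = 0 := by
      have h1 : ∑ i ∈ t, w i * lw f (z i) = lw f x := by
        rw [← hcm, Finset.centerMass, hw1]
        simp only [inv_one, one_smul, map_sum, map_smul, smul_eq_mul]
      have : ∑ i ∈ t, w i * c = c := by rw [← Finset.sum_mul, hw1, one_mul]
      simp only [mul_sub, Finset.sum_sub_distrib, this, h1, hxc, sub_self]
    refine (Finset.sum_eq_zero_iff_of_nonneg ?_).1 hsum
    intro i hi
    exact mul_nonneg (hw0 i hi) (sub_nonneg.2 (hle _ (hzs i hi)))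
  have ht' : x = (t.filter (fun i => w i ≠ 0)).centerMass w z := by
    rw [← hcm, Finset.centerMass_filter_ne_zero]
  rw [ht']
  refine Finset.centerMass_mem_convexHull _ (fun i hi => hw0 i (Finset.mem_filter.1 hi).1) ?_ ?_
  · rw [Finset.sum_filter_ne_zero, hw1]; norm_num
  · intro i hi
    rw [Finset.mem_filter] at hi
    refine ⟨hzs i hi.1, ?_⟩
    have := hzero i hi.1
    rcases mul_eq_zero.1 this with h | h
    · exact absurd h hi.2
    · linarith [hle (z i) (hzs i hi.1)]

lemma lw_comm (f x : Fin d → ℝ) : lw f x = lw x f := by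
  simp only [lw_apply]
  exact Finset.sum_congr rfl fun i _ => mul_comm _ _

lemma lw_rho_left (e : Fin d × Fin d) (x : Fin d → ℝ) : lw (rho e) x = x e.1 - x e.2 := by
  rw [lw_comm, lw_rho]

lemma rho_abs_le (e : Fin d × Fin d) (k : Fin d) : |rho e k| ≤ 1 := by
  simp only [rho]; split_ifs <;> norm_num

lemma lw_rho_rho_le (e e' : Fin d × Fin d) : lw (rho e) (rho e') ≤ 2 := by
  rw [lw_rho_left]
  have h1 := abs_le.1 (rho_abs_le e' e.1)
  have h2 := abs_le.1 (rho_abs_le e' e.2)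
  linarith

lemma rho_eval_one {e : Fin d × Fin d} {k : Fin d} (h : rho e k = 1) : k = e.1 ∧ k ≠ e.2 := by
  unfold rho at h
  split_ifs at h <;> first | exact ⟨by assumption, by assumption⟩ | (norm_num at h)

lemma rho_eval_neg_one {e : Fin d × Fin d} {k : Fin d} (h : rho e k = -1) : k = e.2 ∧ k ≠ e.1 := by
  unfold rho at h
  split_ifs at h <;> first | exact ⟨by assumption, by assumption⟩ | (norm_num at h)

lemma lw_rho_rho_eq_two {e e' : Fin d × Fin d} (h : lw (rho e) (rho e') = 2) : e' = e := by
  rw [lw_rho_left] at h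
  have h1 := abs_le.1 (rho_abs_le e' e.1)
  have h2 := abs_le.1 (rho_abs_le e' e.2)
  have ha : rho e' e.1 = 1 := by linarith
  have hb : rho e' e.2 = -1 := by linarith
  obtain ⟨ha1, -⟩ := rho_eval_one ha
  obtain ⟨hb1, -⟩ := rho_eval_neg_one hb
  exact Prod.ext ha1.symm hb1.symm

lemma mem_polyG_rho {A : Finset (Fin d × Fin d)} {e : Fin d × Fin d} (he : e ∈ A) :
    rho e ∈ polyG A :=
  subset_convexHull ℝ _ ⟨e, he, rfl⟩

lemma rho_self_two {e : Fin d × Fin d} (hne : e.1 ≠ e.2) : lw (rho e) (rho e) = 2 := by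
  rw [lw_rho_left]
  simp [rho, hne, Ne.symm hne]; norm_num

lemma rho_extremePoint {A : Finset (Fin d × Fin d)} {e : Fin d × Fin d} (he : e ∈ A)
    (hne : e.1 ≠ e.2) : rho e ∈ (polyG A).extremePoints ℝ := by
  rw [mem_extremePoints]
  refine ⟨mem_polyG_rho he, ?_⟩
  intro y hy z hz hseg
  have hle : ∀ u ∈ rho '' (A : Set (Fin d × Fin d)), lw (rho e) u ≤ 2 := by
    rintro u ⟨e', -, rfl⟩; exact lw_rho_rho_le e e'
  have hy2 : lw (rho e) y ≤ 2 := le_on_hull hle y hy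
  have hz2 : lw (rho e) z ≤ 2 := le_on_hull hle z hz
  obtain ⟨a, b, ha, hb, hab, hxy⟩ := hseg
  have hcomb : a * lw (rho e) y + b * lw (rho e) z = 2 := by
    have := congrArg (lw (rho e)) hxy
    simpa [map_add, map_smul, smul_eq_mul, rho_self_two hne] using this
  have hy2' : lw (rho e) y = 2 := by nlinarith
  have hz2' : lw (rho e) z = 2 := by nlinarith
  have key : ∀ w, w ∈ convexHull ℝ {u ∈ rho '' (A : Set (Fin d × Fin d)) | lw (rho e) u = 2} →
      w = rho e := by
    intro w hw
    have hsub : {u ∈ rho '' (A : Set (Fin d × Fin d)) | lw (rho e) u = 2} ⊆ {rho e} := by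
      rintro u ⟨⟨e', -, rfl⟩, h2⟩
      simp [lw_rho_rho_eq_two h2]
    have := convexHull_mono hsub hw
    rwa [convexHull_singleton, Set.mem_singleton_iff] at this
  exact ⟨key y (hull_face hle hy hy2'), key z (hull_face hle hz hz2')⟩

lemma extremePoint_mono {P F : Set (Fin d → ℝ)} (hFP : F ⊆ P) {x : Fin d → ℝ}
    (hx : x ∈ P.extremePoints ℝ) (hxF : x ∈ F) : x ∈ F.extremePoints ℝ := by
  rw [mem_extremePoints] at hx ⊢
  exact ⟨hxF, fun y hy z hz hseg => hx.2 y (hFP hy) z (hFP hz) hseg⟩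

lemma extremePoints_face_subset {P : Set (Fin d → ℝ)} {f : Fin d → ℝ} {c : ℝ}
    (hle : ∀ y ∈ P, lw f y ≤ c) {x : Fin d → ℝ}
    (hx : x ∈ ({u ∈ P | lw f u = c}).extremePoints ℝ) : x ∈ P.extremePoints ℝ := by
  rw [mem_extremePoints] at hx ⊢
  obtain ⟨⟨hxP, hxc⟩, hext⟩ := hx
  refine ⟨hxP, ?_⟩
  intro y hy z hz hseg
  obtain ⟨a, b, ha, hb, hab, hxy⟩ := hseg
  have hcomb : a * lw f y + b * lw f z = c := by
    have := congrArg (lw f) hxy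
    simpa [map_add, map_smul, smul_eq_mul, hxc] using this
  have h1 := hle y hy
  have h2 := hle z hz
  have h3 : b * lw f z ≤ b * c := mul_le_mul_of_nonneg_left h2 hb.le
  have h3' : a * lw f y ≤ a * c := mul_le_mul_of_nonneg_left h1 ha.le
  have habc : a * c + b * c = c := by rw [← add_mul, hab, one_mul]
  have h4 : a * c ≤ a * lw f y := by linarith
  have h5 : b * c ≤ b * lw f z := by linarith
  have hy2 : lw f y = c := le_antisymm h1 (le_of_mul_le_mul_left h4 ha)
  have hz2 : lw f z = c := le_antisymm h2 (le_of_mul_le_mul_left h5 hb)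
  exact hext y ⟨hy, hy2⟩ z ⟨hz, hz2⟩ ⟨a, b, ha, hb, hab, hxy⟩

lemma rho_swap (e : Fin d × Fin d) : rho (e.2, e.1) = - rho e := by
  funext k; simp [rho]

lemma rho_self (i : Fin d) : rho (i, i) = 0 := by
  funext k; simp [rho]

lemma rho_trans (a b c : Fin d) : rho (a, c) = rho (a, b) + rho (b, c) := by
  funext k; simp only [rho, Pi.add_apply]; ring

/-- The indicator vector of a vertex. -/
def eV (i : Fin d) : Fin d → ℝ := fun k => if k = i then (1 : ℝ) else 0

lemma eV_ne_zero (i : Fin d) : eV i ≠ 0 := by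
  intro h
  have := congrFun h i
  simp [eV] at this

lemma pi_eq_sum_eV (x : Fin d → ℝ) : x = ∑ i, x i • eV i := by
  funext k
  rw [Finset.sum_apply]
  simp only [Pi.smul_apply, eV, smul_eq_mul, mul_ite, mul_one, mul_zero]
  rw [Finset.sum_ite_eq Finset.univ k x]
  simp

lemma eV_eq_rho_add (i b : Fin d) : eV i = rho (i, b) + eV b := by
  funext k; simp only [rho, eV, Pi.add_apply]; ring

/-- Lower bound on the span of the `ρ`-vectors of a connected graph. -/
lemma span_rho_ge {R : Finset (Fin d × Fin d)}
    (hR : (SimpleGraph.fromRel (fun i j => (i, j) ∈ R)).Connected) :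
    d - 1 ≤ Module.finrank ℝ (Submodule.span ℝ (rho '' (R : Set (Fin d × Fin d)))) := by
  classical
  set W := Submodule.span ℝ (rho '' (R : Set (Fin d × Fin d))) with hW
  have hne : Nonempty (Fin d) := hR.nonempty
  obtain ⟨base⟩ := hne
  have step : ∀ u v : Fin d, (SimpleGraph.fromRel (fun i j => (i, j) ∈ R)).Adj u v →
      rho (u, v) ∈ W := by
    intro u v huv
    rw [SimpleGraph.fromRel_adj] at huv
    rcases huv.2 with h | h
    · exact Submodule.subset_span ⟨(u, v), h, rfl⟩
    · have h2 : rho (u, v) = - rho (v, u) := (rho_swap (v, u)) ▸ rfl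
      rw [h2]
      exact neg_mem (Submodule.subset_span ⟨(v, u), h, rfl⟩)
  have claim : ∀ (u v : Fin d) (w : (SimpleGraph.fromRel (fun i j => (i, j) ∈ R)).Walk u v),
      rho (u, v) ∈ W := by
    intro u v w
    induction w with
    | nil => rw [rho_self]; exact Submodule.zero_mem W
    | @cons u b v h p ih =>
        rw [rho_trans u b v]
        exact add_mem (step _ _ h) ih
  have htop : W ⊔ Submodule.span ℝ {eV base} = ⊤ := by
    rw [eq_top_iff]
    intro x _
    have hx : x = ∑ i, x i • eV i := pi_eq_sum_eV x
    rw [hx]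
    refine Submodule.sum_mem _ (fun i _ => Submodule.smul_mem _ _ ?_)
    rw [eV_eq_rho_add i base]
    refine add_mem ?_ ?_
    · exact Submodule.mem_sup_left (claim i base ((hR.preconnected i base).some))
    · exact Submodule.mem_sup_right (Submodule.subset_span rfl)
  have hd : d = Module.finrank ℝ (Fin d → ℝ) := by simp
  have h1 : Module.finrank ℝ (⊤ : Submodule ℝ (Fin d → ℝ)) = d := by
    rw [finrank_top]; simp
  have h2 := Submodule.finrank_add_le_finrank_add_finrank W (Submodule.span ℝ {eV base})
  rw [htop, h1] at h2
  have h3 : Module.finrank ℝ (Submodule.span ℝ {eV base}) = 1 :=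
    finrank_span_singleton (eV_ne_zero base)
  omega

lemma lw_one_apply (x : Fin d → ℝ) : lw (fun _ => 1) x = ∑ i, x i := by
  simp [lw_apply]

lemma lw_eV (f : Fin d → ℝ) (i : Fin d) : lw f (eV i) = f i := by
  simp only [lw_apply, eV, mul_ite, mul_one, mul_zero]
  rw [Finset.sum_ite_eq' Finset.univ i f]
  simp

lemma finrank_ker_lw1 (hd : 0 < d) :
    Module.finrank ℝ (LinearMap.ker (lw (fun _ => (1:ℝ)) : (Fin d → ℝ) →ₗ[ℝ] ℝ)) = d - 1 := by
  have hrn := LinearMap.finrank_range_add_finrank_ker (lw (fun _ => (1:ℝ)) : (Fin d → ℝ) →ₗ[ℝ] ℝ)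
  have hsurj : LinearMap.range (lw (fun _ => (1:ℝ)) : (Fin d → ℝ) →ₗ[ℝ] ℝ) = ⊤ := by
    rw [eq_top_iff]
    intro c _
    refine ⟨c • eV ⟨0, hd⟩, ?_⟩
    rw [map_smul, lw_eV]
    simp
  rw [hsurj, finrank_top] at hrn
  simp only [Module.finrank_self] at hrn
  have : Module.finrank ℝ (Fin d → ℝ) = d := by simp
  omega

lemma finrank_ker_inf {f : Fin d → ℝ} {i0 i1 : Fin d} (h0 : f i0 = 0) (h1 : f i1 = 1) :
    Module.finrank ℝ
      ↥((LinearMap.ker (lw (fun _ => (1:ℝ)) : (Fin d → ℝ) →ₗ[ℝ] ℝ)) ⊓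
        (LinearMap.ker (lw f))) = d - 2 := by
  set φ := ((lw (fun _ => (1:ℝ)) : (Fin d → ℝ) →ₗ[ℝ] ℝ)).prod (lw f) with hφ
  have hker : LinearMap.ker φ = (LinearMap.ker (lw (fun _ => (1:ℝ)))) ⊓ (LinearMap.ker (lw f)) :=
    LinearMap.ker_prod _ _
  have hrn := LinearMap.finrank_range_add_finrank_ker φ
  have hsurj : LinearMap.range φ = ⊤ := by
    rw [eq_top_iff]
    rintro ⟨a, b⟩ _
    refine ⟨a • eV i0 + b • (eV i1 - eV i0), ?_⟩
    have hv1 : lw (fun _ => (1:ℝ)) (a • eV i0 + b • (eV i1 - eV i0)) = a := by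
      simp [map_add, map_smul, map_sub, lw_eV]
    have hv2 : lw f (a • eV i0 + b • (eV i1 - eV i0)) = b := by
      simp [map_add, map_smul, map_sub, lw_eV, h0, h1]
    simp only [hφ, LinearMap.prod_apply, Function.prod, hv1, hv2]
  rw [hsurj, hker] at hrn
  have hr2 : Module.finrank ℝ (⊤ : Submodule ℝ (ℝ × ℝ)) = 2 := by
    rw [finrank_top]; simp
  rw [hr2] at hrn
  have : Module.finrank ℝ (Fin d → ℝ) = d := by simp
  omega

lemma vectorSpan_convexHull' (s : Set (Fin d → ℝ)) :
    vectorSpan ℝ (convexHull ℝ s) = vectorSpan ℝ s := by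
  rw [← direction_affineSpan, affineSpan_convexHull, direction_affineSpan]

lemma sum_zero_of_mem_polyG {A : Finset (Fin d × Fin d)} {x : Fin d → ℝ} (hx : x ∈ polyG A) :
    lw (fun _ => (1:ℝ)) x = 0 := by
  refine eq_on_hull ?_ x hx
  rintro y ⟨e, -, rfl⟩
  rw [lw_rho]; ring

/-- The dimension of `polyG A` for a connected symmetric graph. -/
lemma finrank_vectorSpan_polyG {A : Finset (Fin d × Fin d)}
    (hconn : (SimpleGraph.fromRel (fun i j => (i, j) ∈ A)).Connected)
    (hsym : ∀ i j : Fin d, (i, j) ∈ A → (j, i) ∈ A) :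
    Module.finrank ℝ (vectorSpan ℝ (polyG A)) = d - 1 := by
  have hd : 0 < d := by
    have : Nonempty (Fin d) := hconn.nonempty
    exact Fin.pos this.some
  rw [polyG, vectorSpan_convexHull']
  have hup : vectorSpan ℝ (rho '' (A : Set (Fin d × Fin d))) ≤
      LinearMap.ker (lw (fun _ => (1:ℝ)) : (Fin d → ℝ) →ₗ[ℝ] ℝ) := by
    rw [vectorSpan_def, Submodule.span_le]
    rintro v hv
    obtain ⟨x, hx, y, hy, rfl⟩ := hv
    have hx0 : lw (fun _ => (1:ℝ)) x = 0 := sum_zero_of_mem_polyG (subset_convexHull ℝ _ hx)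
    have hy0 : lw (fun _ => (1:ℝ)) y = 0 := sum_zero_of_mem_polyG (subset_convexHull ℝ _ hy)
    simp only [SetLike.mem_coe, LinearMap.mem_ker, vsub_eq_sub, map_sub, hx0, hy0, sub_zero]
  have hlow : Submodule.span ℝ (rho '' (A : Set (Fin d × Fin d))) ≤
      vectorSpan ℝ (rho '' (A : Set (Fin d × Fin d))) := by
    rw [Submodule.span_le]
    rintro v ⟨e, he, rfl⟩
    have h1 : rho e ∈ rho '' (A : Set (Fin d × Fin d)) := ⟨e, he, rfl⟩
    have h2 : rho (e.2, e.1) ∈ rho '' (A : Set (Fin d × Fin d)) :=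
      ⟨(e.2, e.1), hsym e.1 e.2 he, rfl⟩
    have hv := vsub_mem_vectorSpan ℝ h1 h2
    rw [rho_swap] at hv
    have : rho e = (1/2 : ℝ) • (rho e -ᵥ (- rho e)) := by
      simp only [vsub_eq_sub, sub_neg_eq_add]
      funext k; simp; ring
    rw [this]
    exact Submodule.smul_mem _ _ hv
  refine le_antisymm ?_ ?_
  · calc Module.finrank ℝ (vectorSpan ℝ (rho '' (A : Set (Fin d × Fin d))))
        ≤ Module.finrank ℝ (LinearMap.ker (lw (fun _ => (1:ℝ)) : (Fin d → ℝ) →ₗ[ℝ] ℝ)) :=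
          Submodule.finrank_mono hup
      _ = d - 1 := finrank_ker_lw1 hd
  · calc d - 1 ≤ Module.finrank ℝ (Submodule.span ℝ (rho '' (A : Set (Fin d × Fin d)))) :=
          span_rho_ge hconn
      _ ≤ Module.finrank ℝ (vectorSpan ℝ (rho '' (A : Set (Fin d × Fin d)))) :=
          Submodule.finrank_mono hlow

/-- Dimension of the face cut out by a functional `f` whose tight graph is spanning connected. -/
lemma finrank_vectorSpan_face {A T : Finset (Fin d × Fin d)} {f : Fin d → ℝ} {i0 i1 : Fin d}
    (hTA : T ⊆ A) (hT : ∀ e ∈ T, lw f (rho e) = 1)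
    (hTconn : (SimpleGraph.fromRel (fun i j => (i, j) ∈ T)).Connected)
    (h0 : f i0 = 0) (h1 : f i1 = 1) :
    Module.finrank ℝ (vectorSpan ℝ {x ∈ polyG A | lw f x = 1}) = d - 2 := by
  classical
  set F : Set (Fin d → ℝ) := {x ∈ polyG A | lw f x = 1} with hF
  have hd2 : 2 ≤ d := by
    have hne : i0 ≠ i1 := by intro h; rw [h, h1] at h0; norm_num at h0
    have := i0.isLt; have := i1.isLt
    have : (i0 : ℕ) ≠ (i1 : ℕ) := fun h => hne (Fin.ext h)
    omega
  -- upper bound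
  have hup : vectorSpan ℝ F ≤
      (LinearMap.ker (lw (fun _ => (1:ℝ)) : (Fin d → ℝ) →ₗ[ℝ] ℝ)) ⊓ (LinearMap.ker (lw f)) := by
    rw [vectorSpan_def, Submodule.span_le]
    rintro v hv
    obtain ⟨x, hx, y, hy, rfl⟩ := hv
    obtain ⟨hxP, hxf⟩ := hx
    obtain ⟨hyP, hyf⟩ := hy
    rw [SetLike.mem_coe, Submodule.mem_inf]
    constructor
    · simp only [LinearMap.mem_ker, vsub_eq_sub, map_sub,
        sum_zero_of_mem_polyG hxP, sum_zero_of_mem_polyG hyP, sub_zero]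
    · simp only [LinearMap.mem_ker, vsub_eq_sub, map_sub, hxf, hyf, sub_self]
  -- T is nonempty
  have hTne : ∃ e0, e0 ∈ T := by
    by_contra h
    push_neg at h
    have : i0 ≠ i1 := by intro hh; rw [hh, h1] at h0; norm_num at h0
    obtain ⟨w⟩ := hTconn.preconnected i0 i1
    cases w with
    | nil => exact this rfl
    | cons ha p =>
        rw [SimpleGraph.fromRel_adj] at ha
        rcases ha.2 with hh | hh
        · exact h _ hh
        · exact h _ hh
  obtain ⟨e0, he0⟩ := hTne
  have hrhoF : ∀ e ∈ T, rho e ∈ F := fun e he => ⟨mem_polyG_rho (hTA he), hT e he⟩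
  -- lower bound
  have hlow : Submodule.span ℝ (rho '' (T : Set (Fin d × Fin d))) ≤
      vectorSpan ℝ F ⊔ Submodule.span ℝ {rho e0} := by
    rw [Submodule.span_le]
    rintro v ⟨e, he, rfl⟩
    have hdiff : rho e - rho e0 ∈ vectorSpan ℝ F := by
      have := vsub_mem_vectorSpan ℝ (hrhoF e he) (hrhoF e0 he0)
      simpa using this
    have : rho e = (rho e - rho e0) + rho e0 := by abel
    rw [this]
    exact add_mem (Submodule.mem_sup_left hdiff)
      (Submodule.mem_sup_right (Submodule.subset_span rfl))
  have hrank1 : Module.finrank ℝ (Submodule.span ℝ {rho e0}) ≤ 1 := by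
    by_cases hz : rho e0 = (0 : Fin d → ℝ)
    · rw [hz, Submodule.span_zero_singleton]
      simp
    · rw [finrank_span_singleton hz]
  have hchain := Submodule.finrank_add_le_finrank_add_finrank (vectorSpan ℝ F)
    (Submodule.span ℝ {rho e0})
  have hlow2 : d - 1 ≤ Module.finrank ℝ ↥(vectorSpan ℝ F ⊔ Submodule.span ℝ {rho e0}) :=
    le_trans (span_rho_ge hTconn) (Submodule.finrank_mono hlow)
  have hup2 : Module.finrank ℝ (vectorSpan ℝ F) ≤ d - 2 := by
    calc Module.finrank ℝ (vectorSpan ℝ F)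
        ≤ Module.finrank ℝ ↥((LinearMap.ker (lw (fun _ => (1:ℝ)) : (Fin d → ℝ) →ₗ[ℝ] ℝ)) ⊓
            (LinearMap.ker (lw f))) := Submodule.finrank_mono hup
      _ = d - 2 := finrank_ker_inf h0 h1
  omega

lemma lwC_eq (f x : Fin d → ℝ) : lwC f x = lw f x := rfl


lemma nxt_val {C : PreCycle (Fin d)} (j : Fin C.l) :
    ((C.nxt j : ℕ)) = if (j : ℕ) + 1 = C.l then 0 else (j : ℕ) + 1 := by
  have hj := j.isLt
  have hpos := C.pos
  show ((j : ℕ) + 1) % C.l = _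
  split_ifs with h
  · rw [h, Nat.mod_self]
  · exact Nat.mod_eq_of_lt (by omega)

lemma nxt_ne {C : PreCycle (Fin d)} (j : Fin C.l) : C.nxt j ≠ j := by
  intro h
  have hv := congrArg Fin.val h
  rw [nxt_val] at hv
  have hj := j.isLt
  have := C.two_le
  split_ifs at hv <;> omega

lemma even_nxt {C : PreCycle (Fin d)} (heven : Even C.l) (j : Fin C.l) :
    Even ((C.nxt j : ℕ)) ↔ ¬ Even ((j : ℕ)) := by
  rw [nxt_val]
  have hj := j.isLt
  rcases heven with ⟨m, hm⟩
  split_ifs with h <;> rw [Nat.even_iff, Nat.even_iff] <;> omega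

/-- The set of even-position cycle vertices. -/
noncomputable def S0 (C : PreCycle (Fin d)) : Finset (Fin d) :=
  (Finset.univ.filter (fun j : Fin C.l => Even ((j : ℕ)))).image C.v

lemma S0_nonempty (C : PreCycle (Fin d)) : (S0 C).Nonempty :=
  ⟨C.v ⟨0, C.pos⟩, Finset.mem_image_of_mem _ (by simp)⟩

/-- Distance from `i` to the set of even cycle vertices. -/
noncomputable def fN (A : Finset (Fin d × Fin d)) (C : PreCycle (Fin d)) (i : Fin d) : ℕ :=
  ((S0 C).image (fun s => (SimpleGraph.fromRel (fun i j => (i, j) ∈ A)).dist i s)).min'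
    (Finset.Nonempty.image (S0_nonempty C) _)

lemma fN_le {A : Finset (Fin d × Fin d)} {C : PreCycle (Fin d)} {i s : Fin d} (hs : s ∈ S0 C) :
    fN A C i ≤ (SimpleGraph.fromRel (fun i j => (i, j) ∈ A)).dist i s :=
  Finset.min'_le _ _ (Finset.mem_image_of_mem _ hs)

lemma fN_exists (A : Finset (Fin d × Fin d)) (C : PreCycle (Fin d)) (i : Fin d) : ∃ s ∈ S0 C,
    fN A C i = (SimpleGraph.fromRel (fun i j => (i, j) ∈ A)).dist i s := by
  have := Finset.min'_mem ((S0 C).image (fun s => (SimpleGraph.fromRel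
    (fun i j => (i, j) ∈ A)).dist i s)) (Finset.Nonempty.image (S0_nonempty C) _)
  rw [Finset.mem_image] at this
  obtain ⟨s, hs, h⟩ := this
  exact ⟨s, hs, h.symm⟩

lemma mem_S0_iff {C : PreCycle (Fin d)} {x : Fin d} :
    x ∈ S0 C ↔ ∃ j : Fin C.l, Even ((j : ℕ)) ∧ C.v j = x := by
  constructor
  · intro h
    rw [S0, Finset.mem_image] at h
    obtain ⟨j, hj, h2⟩ := h
    rw [Finset.mem_filter] at hj
    exact ⟨j, hj.2, h2⟩
  · rintro ⟨j, hj, rfl⟩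
    exact Finset.mem_image_of_mem _ (Finset.mem_filter.2 ⟨Finset.mem_univ _, hj⟩)

lemma fN_even {A : Finset (Fin d × Fin d)} {C : PreCycle (Fin d)} {j : Fin C.l}
    (hj : Even ((j : ℕ))) : fN A C (C.v j) = 0 := by
  have h1 : fN A C (C.v j) ≤ 0 := by
    have := fN_le (A := A) (i := C.v j) (mem_S0_iff.2 ⟨j, hj, rfl⟩)
    simpa [SimpleGraph.dist_self] using this
  omega

lemma cycle_adj {A : Finset (Fin d × Fin d)} {C : PreCycle (Fin d)}
    (hCA : ∀ j, (C.v j, C.v (C.nxt j)) ∈ A ∨ (C.v (C.nxt j), C.v j) ∈ A) (j : Fin C.l) :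
    (SimpleGraph.fromRel (fun i j => (i, j) ∈ A)).Adj (C.v j) (C.v (C.nxt j)) := by
  rw [SimpleGraph.fromRel_adj]
  exact ⟨fun h => nxt_ne j (C.inj h.symm), hCA j⟩

lemma fN_odd {A : Finset (Fin d × Fin d)} {C : PreCycle (Fin d)}
    (hconn : (SimpleGraph.fromRel (fun i j => (i, j) ∈ A)).Connected)
    (hCA : ∀ j, (C.v j, C.v (C.nxt j)) ∈ A ∨ (C.v (C.nxt j), C.v j) ∈ A)
    (heven : Even C.l) {j : Fin C.l} (hj : ¬ Even ((j : ℕ))) : fN A C (C.v j) = 1 := by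
  have hle : fN A C (C.v j) ≤ 1 := by
    have hmem : C.v (C.nxt j) ∈ S0 C :=
      mem_S0_iff.2 ⟨C.nxt j, (even_nxt heven j).2 hj, rfl⟩
    have hd1 : (SimpleGraph.fromRel (fun i j => (i, j) ∈ A)).dist (C.v j) (C.v (C.nxt j)) = 1 :=
      SimpleGraph.dist_eq_one_iff_adj.2 (cycle_adj hCA j)
    have := fN_le (A := A) (i := C.v j) hmem
    omega
  have hne : fN A C (C.v j) ≠ 0 := by
    intro h0
    obtain ⟨s, hs, heq⟩ := fN_exists A C (C.v j)
    rw [h0] at heq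
    have : C.v j = s := (hconn.dist_eq_zero_iff).1 heq.symm
    obtain ⟨j', hj', hj'2⟩ := mem_S0_iff.1 hs
    rw [← this] at hj'2
    rw [C.inj hj'2] at hj'
    exact hj hj'
  omega

lemma fN_lip {A : Finset (Fin d × Fin d)} {C : PreCycle (Fin d)}
    (hconn : (SimpleGraph.fromRel (fun i j => (i, j) ∈ A)).Connected)
    {i j : Fin d} (h : (i, j) ∈ A) : fN A C i ≤ fN A C j + 1 := by
  by_cases hij : i = j
  · subst hij; omega
  · have hadj : (SimpleGraph.fromRel (fun i j => (i, j) ∈ A)).Adj i j :=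
      (SimpleGraph.fromRel_adj _ i j).2 ⟨hij, Or.inl h⟩
    obtain ⟨s, hs, heq⟩ := fN_exists A C j
    have h1 := fN_le (A := A) (i := i) hs
    have h2 := hconn.dist_triangle (u := i) (v := j) (w := s)
    have h3 : (SimpleGraph.fromRel (fun i j => (i, j) ∈ A)).dist i j = 1 :=
      SimpleGraph.dist_eq_one_iff_adj.2 hadj
    omega

lemma fN_descend {A : Finset (Fin d × Fin d)} {C : PreCycle (Fin d)}
    (hconn : (SimpleGraph.fromRel (fun i j => (i, j) ∈ A)).Connected)
    (hsym : ∀ i j : Fin d, (i, j) ∈ A → (j, i) ∈ A)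
    {i : Fin d} (h : 0 < fN A C i) :
    ∃ b, (i, b) ∈ A ∧ fN A C b + 1 = fN A C i := by
  obtain ⟨s, hs, heq⟩ := fN_exists A C i
  have hreach : (SimpleGraph.fromRel (fun i j => (i, j) ∈ A)).Reachable i s :=
    hconn.preconnected i s
  obtain ⟨p, hp⟩ := hreach.exists_walk_length_eq_dist
  cases p with
  | nil => rw [SimpleGraph.Walk.length_nil] at hp; omega
  | @cons _ b _ hadj q =>
      rw [SimpleGraph.Walk.length_cons] at hp
      have hbA : (i, b) ∈ A := by
        rw [SimpleGraph.fromRel_adj] at hadj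
        rcases hadj.2 with hh | hh
        · exact hh
        · exact hsym _ _ hh
      have h1 : fN A C b ≤ q.length := le_trans (fN_le hs) (SimpleGraph.dist_le q)
      have h2 : fN A C i ≤ fN A C b + 1 := fN_lip hconn hbA
      exact ⟨b, hbA, by omega⟩

/-- The tight arrow set. -/
noncomputable def tightT (A : Finset (Fin d × Fin d)) (C : PreCycle (Fin d)) :
    Finset (Fin d × Fin d) :=
  A.filter (fun e => fN A C e.2 + 1 = fN A C e.1)

lemma tightT_subset {A : Finset (Fin d × Fin d)} {C : PreCycle (Fin d)} :
    tightT A C ⊆ A := Finset.filter_subset _ _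

lemma cycle_adj_T {A : Finset (Fin d × Fin d)} {C : PreCycle (Fin d)}
    (hconn : (SimpleGraph.fromRel (fun i j => (i, j) ∈ A)).Connected)
    (hsym : ∀ i j : Fin d, (i, j) ∈ A → (j, i) ∈ A)
    (hCA : ∀ j, (C.v j, C.v (C.nxt j)) ∈ A ∨ (C.v (C.nxt j), C.v j) ∈ A)
    (heven : Even C.l) (j : Fin C.l) :
    (SimpleGraph.fromRel (fun i j => (i, j) ∈ tightT A C)).Adj (C.v j) (C.v (C.nxt j)) := by
  have hne : C.v j ≠ C.v (C.nxt j) := fun h => nxt_ne j (C.inj h.symm)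
  have hboth : (C.v j, C.v (C.nxt j)) ∈ A ∧ (C.v (C.nxt j), C.v j) ∈ A := by
    rcases hCA j with h | h
    · exact ⟨h, hsym _ _ h⟩
    · exact ⟨hsym _ _ h, h⟩
  rw [SimpleGraph.fromRel_adj]
  refine ⟨hne, ?_⟩
  by_cases hj : Even ((j : ℕ))
  · -- v j has value 0, v (nxt j) has value 1 : arrow from nxt to j is tight
    right
    rw [tightT, Finset.mem_filter]
    refine ⟨hboth.2, ?_⟩
    simp only
    rw [fN_even hj, fN_odd hconn hCA heven ((even_nxt heven j).not.2 (by simp [hj]))]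
  · left
    rw [tightT, Finset.mem_filter]
    refine ⟨hboth.1, ?_⟩
    simp only
    rw [fN_odd hconn hCA heven hj, fN_even ((even_nxt heven j).2 hj)]

lemma tightT_connected {A : Finset (Fin d × Fin d)} {C : PreCycle (Fin d)}
    (hconn : (SimpleGraph.fromRel (fun i j => (i, j) ∈ A)).Connected)
    (hsym : ∀ i j : Fin d, (i, j) ∈ A → (j, i) ∈ A)
    (hCA : ∀ j, (C.v j, C.v (C.nxt j)) ∈ A ∨ (C.v (C.nxt j), C.v j) ∈ A)
    (heven : Even C.l) :
    (SimpleGraph.fromRel (fun i j => (i, j) ∈ tightT A C)).Connected := by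
  set T' := SimpleGraph.fromRel (fun i j => (i, j) ∈ tightT A C) with hT'
  set z0 : Fin d := C.v ⟨0, C.pos⟩ with hz0
  have aux_cycle : ∀ k (hk : k < C.l), T'.Reachable (C.v ⟨k, hk⟩) z0 := by
    intro k
    induction k with
    | zero => intro hk; exact SimpleGraph.Reachable.refl _
    | succ n ih =>
        intro hk
        have hn : n < C.l := by omega
        have hnxt : C.nxt ⟨n, hn⟩ = ⟨n + 1, hk⟩ := by
          apply Fin.ext
          rw [nxt_val]
          simp only
          split_ifs with h <;> omega
        have hadj := cycle_adj_T hconn hsym hCA heven (⟨n, hn⟩ : Fin C.l)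
        rw [hnxt] at hadj
        exact (hadj.symm.reachable).trans (ih hn)
  have aux1 : ∀ n (i : Fin d), fN A C i = n → T'.Reachable i z0 := by
    intro n
    induction n using Nat.strong_induction_on with
    | _ n ih =>
      intro i hi
      rcases Nat.eq_zero_or_pos n with h0 | hpos
      · subst h0
        obtain ⟨s, hs, heq⟩ := fN_exists A C i
        rw [hi] at heq
        have his : i = s := (hconn.dist_eq_zero_iff).1 heq.symm
        obtain ⟨j, hj, hj2⟩ := mem_S0_iff.1 hs
        subst his
        rw [← hj2]
        have : (⟨(j : ℕ), j.isLt⟩ : Fin C.l) = j := by apply Fin.ext; rfl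
        rw [← this]
        exact aux_cycle (j : ℕ) j.isLt
      · obtain ⟨b, hbA, hb⟩ := fN_descend hconn hsym (hi ▸ hpos)
        have hbT : (i, b) ∈ tightT A C := by
          rw [tightT, Finset.mem_filter]
          exact ⟨hbA, hb⟩
        have hne : i ≠ b := by
          intro h; rw [h] at hb; omega
        have hadj : T'.Adj i b := (SimpleGraph.fromRel_adj _ i b).2 ⟨hne, Or.inl hbT⟩
        exact (hadj.reachable).trans (ih (fN A C b) (by omega) b rfl)
  rw [SimpleGraph.connected_iff]
  refine ⟨fun x y => ?_, ⟨z0⟩⟩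
  exact (aux1 _ x rfl).trans (aux1 _ y rfl).symm
lemma rho_val (e : Fin d × Fin d) (hne : e.1 ≠ e.2) (a : Fin d) :
    rho e a = if a = e.1 then (1:ℝ) else if a = e.2 then -1 else 0 := by
  unfold rho
  split_ifs with h1 h2 <;> first | exact absurd (h1.symm.trans h2) hne | norm_num

/-- From a vanishing weighted combination of tight `ρ`-vectors one extracts an even cycle. -/
theorem exists_even_cycle {A : Finset (Fin d × Fin d)} {m : ℝ} (hm : 0 < m) {f : Fin d → ℝ}
    {ι : Type*} {p : ι → Fin d → ℝ} (hpinj : Function.Injective p)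
    {s : Finset ι} {w : ι → ℝ}
    (harr : ∀ i ∈ s, w i ≠ 0 → ∃ e : Fin d × Fin d, e ∈ A ∧ p i = rho e ∧ f e.1 - f e.2 = m)
    (hsum : ∀ a : Fin d, ∑ i ∈ s, w i * p i a = 0)
    {i0 : ι} (hi0 : i0 ∈ s) (hw0 : w i0 ≠ 0) : HasEvenCycle A := by
  classical
  set supp := s.filter (fun i => w i ≠ 0) with hsupp
  have hsupp_mem : ∀ i, i ∈ supp ↔ i ∈ s ∧ w i ≠ 0 := by
    intro i; rw [hsupp, Finset.mem_filter]
  have hi0s : i0 ∈ supp := (hsupp_mem i0).2 ⟨hi0, hw0⟩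
  obtain ⟨e0, -, -, -⟩ := harr i0 hi0 hw0
  have harr' : ∀ i ∈ supp, ∃ e : Fin d × Fin d, e ∈ A ∧ p i = rho e ∧ f e.1 - f e.2 = m :=
    fun i hi => harr i ((hsupp_mem i).1 hi).1 ((hsupp_mem i).1 hi).2
  set arrow : ι → Fin d × Fin d := fun i =>
    if h : i ∈ supp then Classical.choose (harr' i h) else e0 with harrow
  have hspec : ∀ i ∈ supp, arrow i ∈ A ∧ p i = rho (arrow i) ∧
      f (arrow i).1 - f (arrow i).2 = m := by
    intro i hi
    rw [harrow]
    simp only [dif_pos hi]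
    exact Classical.choose_spec (harr' i hi)
  have hne12 : ∀ i ∈ supp, (arrow i).1 ≠ (arrow i).2 := by
    intro i hi heq
    have h := (hspec i hi).2.2
    rw [heq] at h
    simp at h
    rw [← h] at hm
    exact lt_irrefl 0 hm
  have hpval : ∀ i ∈ supp, ∀ a : Fin d,
      p i a = if a = (arrow i).1 then (1:ℝ) else if a = (arrow i).2 then -1 else 0 := by
    intro i hi a
    rw [(hspec i hi).2.1, rho_val _ (hne12 i hi)]
  have hpair : ∀ i ∈ supp, ∀ i' ∈ supp, ∀ a b : Fin d,
      ((arrow i).1 = a ∧ (arrow i).2 = b) ∨ ((arrow i).1 = b ∧ (arrow i).2 = a) →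
      ((arrow i').1 = a ∧ (arrow i').2 = b) ∨ ((arrow i').1 = b ∧ (arrow i').2 = a) →
      i = i' := by
    intro i hi i' hi' a b h1 h2
    have key : arrow i = arrow i' := by
      rcases h1 with ⟨u1, u2⟩ | ⟨u1, u2⟩ <;> rcases h2 with ⟨v1, v2⟩ | ⟨v1, v2⟩
      · exact Prod.ext (u1.trans v1.symm) (u2.trans v2.symm)
      · exfalso
        have hf1 := (hspec i hi).2.2
        have hf2 := (hspec i' hi').2.2
        rw [u1, u2] at hf1
        rw [v1, v2] at hf2
        linarith
      · exfalso
        have hf1 := (hspec i hi).2.2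
        have hf2 := (hspec i' hi').2.2
        rw [u1, u2] at hf1
        rw [v1, v2] at hf2
        linarith
      · exact Prod.ext (u1.trans v1.symm) (u2.trans v2.symm)
    apply hpinj
    rw [(hspec i hi).2.1, (hspec i' hi').2.1, key]
  have hdeg : ∀ i ∈ supp, ∀ a : Fin d, (a = (arrow i).1 ∨ a = (arrow i).2) →
      ∃ i', i' ∈ supp ∧ i' ≠ i ∧ (a = (arrow i').1 ∨ a = (arrow i').2) := by
    intro i hi a ha
    by_contra hcon
    push_neg at hcon
    have hzero : ∀ b ∈ s, b ≠ i → w b * p b a = 0 := by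
      intro b hb hbi
      by_cases hwb : w b = 0
      · rw [hwb, zero_mul]
      · have hbs : b ∈ supp := (hsupp_mem b).2 ⟨hb, hwb⟩
        have hnotinc := hcon b hbs hbi
        rw [hpval b hbs a, if_neg hnotinc.1, if_neg hnotinc.2, mul_zero]
    have hs0 := hsum a
    rw [Finset.sum_eq_single_of_mem i ((hsupp_mem i).1 hi).1 hzero] at hs0
    have hpia : p i a = 1 ∨ p i a = -1 := by
      rw [hpval i hi a]
      rcases ha with h | h
      · left; rw [if_pos h]
      · right
        have hna : ¬ a = (arrow i).1 := fun hh => hne12 i hi (hh.symm.trans h)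
        rw [if_neg hna, if_pos h]
    have hwi : w i ≠ 0 := ((hsupp_mem i).1 hi).2
    rcases hpia with h | h <;> rw [h] at hs0 <;>
      [exact hwi (by linarith); exact hwi (by linarith)]
  -- the non-backtracking walk
  set other : ι → Fin d → Fin d := fun i a =>
    if a = (arrow i).1 then (arrow i).2 else (arrow i).1 with hother
  have hother_incid : ∀ i a, (other i a = (arrow i).1 ∨ other i a = (arrow i).2) := by
    intro i a
    rw [hother]
    simp only
    split_ifs with h
    · exact Or.inr rfl
    · exact Or.inl rfl
  set cond : ι × Fin d → Prop := fun q =>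
    ∃ i', i' ∈ supp ∧ i' ≠ q.1 ∧
      (other q.1 q.2 = (arrow i').1 ∨ other q.1 q.2 = (arrow i').2) with hcond
  set stepF : ι × Fin d → ι × Fin d := fun q =>
    if h : cond q then (Classical.choose h, other q.1 q.2) else q with hstepF
  set EV : ℕ → ι × Fin d := fun n => stepF^[n] (i0, (arrow i0).1) with hEV
  set E : ℕ → ι := fun n => (EV n).1 with hE
  set V : ℕ → Fin d := fun n => (EV n).2 with hV
  have hinv : ∀ k, E k ∈ supp ∧ (V k = (arrow (E k)).1 ∨ V k = (arrow (E k)).2) := by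
    intro k
    induction k with
    | zero => exact ⟨hi0s, Or.inl rfl⟩
    | succ n ih =>
        have hc : cond (EV n) := by
          rw [hcond]
          obtain ⟨i', h1, h2, h3⟩ :=
            hdeg (E n) ih.1 (other (E n) (V n)) (hother_incid (E n) (V n))
          exact ⟨i', h1, h2, h3⟩
        have hEVn : EV (n + 1) = (Classical.choose hc, other (E n) (V n)) := by
          show stepF^[n+1] (i0, (arrow i0).1) = _
          rw [Function.iterate_succ_apply']
          show (if h : cond (EV n) then (Classical.choose h, other (EV n).1 (EV n).2)
            else EV n) = _
          rw [dif_pos hc]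
        obtain ⟨hc1, hc2, hc3⟩ := Classical.choose_spec hc
        refine ⟨?_, ?_⟩
        · show (EV (n+1)).1 ∈ supp
          rw [hEVn]; exact hc1
        · show (EV (n+1)).2 = (arrow (EV (n+1)).1).1 ∨ (EV (n+1)).2 = (arrow (EV (n+1)).1).2
          rw [hEVn]
          exact hc3
  have hcondAt : ∀ n, cond (EV n) := by
    intro n
    rw [hcond]
    obtain ⟨i', h1, h2, h3⟩ :=
      hdeg (E n) (hinv n).1 (other (E n) (V n)) (hother_incid (E n) (V n))
    exact ⟨i', h1, h2, h3⟩
  have hstepEq : ∀ n, EV (n + 1) = (Classical.choose (hcondAt n), other (E n) (V n)) := by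
    intro n
    show stepF^[n+1] (i0, (arrow i0).1) = _
    rw [Function.iterate_succ_apply']
    show (if h : cond (EV n) then (Classical.choose h, other (EV n).1 (EV n).2)
      else EV n) = _
    rw [dif_pos (hcondAt n)]
  have hVstep : ∀ n, V (n + 1) = other (E n) (V n) := fun n =>
    congrArg Prod.snd (hstepEq n)
  have hEstep : ∀ n, E (n + 1) = Classical.choose (hcondAt n) := fun n =>
    congrArg Prod.fst (hstepEq n)
  have hEne : ∀ n, E (n + 1) ≠ E n := by
    intro n
    rw [hEstep n]
    exact (Classical.choose_spec (hcondAt n)).2.1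
  have hends : ∀ k, ((arrow (E k)).1 = V k ∧ (arrow (E k)).2 = V (k+1)) ∨
      ((arrow (E k)).1 = V (k+1) ∧ (arrow (E k)).2 = V k) := by
    intro k
    have hvs := hVstep k
    rw [hother] at hvs
    simp only at hvs
    rcases (hinv k).2 with h | h
    · left
      rw [if_pos h] at hvs
      exact ⟨h.symm, hvs.symm⟩
    · right
      have hne : ¬ (V k = (arrow (E k)).1) := by
        intro hh
        exact hne12 (E k) (hinv k).1 (hh.symm.trans h)
      rw [if_neg hne] at hvs
      exact ⟨hvs.symm, h.symm⟩
  have hedge : ∀ k, (V k, V (k+1)) ∈ A ∨ (V (k+1), V k) ∈ A := by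
    intro k
    have hA := (hspec (E k) (hinv k).1).1
    rcases hends k with ⟨h1, h2⟩ | ⟨h1, h2⟩
    · left
      have : arrow (E k) = (V k, V (k+1)) := Prod.ext h1 h2
      rwa [this] at hA
    · right
      have : arrow (E k) = (V (k+1), V k) := Prod.ext h1 h2
      rwa [this] at hA
  have hfstep : ∀ k, f (V k) - f (V (k+1)) = m ∨ f (V k) - f (V (k+1)) = -m := by
    intro k
    have hfm := (hspec (E k) (hinv k).1).2.2
    rcases hends k with ⟨h1, h2⟩ | ⟨h1, h2⟩
    · left; rw [← h1, ← h2]; exact hfm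
    · right; rw [← h1, ← h2]; linarith
  have hVne1 : ∀ k, V (k+1) ≠ V k := by
    intro k h
    rcases hends k with ⟨h1, h2⟩ | ⟨h1, h2⟩ <;>
      exact hne12 (E k) (hinv k).1 (by rw [h1, h2, h])
  have hVne2 : ∀ k, V (k+2) ≠ V k := by
    intro k h
    apply hEne k
    apply hpair (E (k+1)) (hinv (k+1)).1 (E k) (hinv k).1 (V k) (V (k+1))
    · have := hends (k+1)
      have hrw : V (k + 1 + 1) = V k := h
      rw [hrw] at this
      exact this.symm
    · exact hends k
  -- pigeonhole: some vertex repeats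
  have hrep : ∃ n, ∃ k, k < n ∧ V k = V n := by
    have hcard : Fintype.card (Fin d) < Fintype.card (Fin (d + 1)) := by simp
    obtain ⟨a, b, hab, hVab⟩ := Fintype.exists_ne_map_eq_of_card_lt
      (fun j : Fin (d + 1) => V (j : ℕ)) hcard
    rcases Nat.lt_or_ge (a : ℕ) (b : ℕ) with hlt | hge
    · exact ⟨b, a, hlt, hVab⟩
    · have : (b : ℕ) < (a : ℕ) := by
        rcases Nat.eq_or_lt_of_le hge with heq | hlt
        · exact absurd (Fin.ext heq.symm) hab
        · exact hlt
      exact ⟨a, b, this, hVab.symm⟩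
  set k1 := Nat.find hrep with hk1
  obtain ⟨k, hklt, hVeq⟩ := Nat.find_spec hrep
  have hVinj : ∀ a b, a < b → b < k1 → V a ≠ V b := by
    intro a b hab hb h
    exact Nat.find_min hrep hb ⟨a, hab, h⟩
  set L := k1 - k with hL
  have hkL : k + L = k1 := by omega
  have hL3 : 3 ≤ L := by
    rcases Nat.lt_or_ge L 3 with hc | hc
    · interval_cases L
      · omega
      · exfalso
        apply hVne1 k
        rw [show k + 1 = k1 by omega]
        exact hVeq.symm
      · exfalso
        apply hVne2 k
        rw [show k + 2 = k1 by omega]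
        exact hVeq.symm
    · exact hc
  -- evenness
  set g : ℕ → ℝ := fun j => f (V (k + j)) with hg
  have htel : ∑ j ∈ Finset.range L, (g (j+1) - g j) = g L - g 0 := Finset.sum_range_sub g L
  have hgL : g L = g 0 := by
    rw [hg]
    simp only
    rw [hkL, Nat.add_zero, hVeq]
  rw [hgL, sub_self] at htel
  have hterm : ∀ j, g (j+1) - g j = m ∨ g (j+1) - g j = -m := by
    intro j
    have := hfstep (k + j)
    rw [hg]
    simp only
    rw [show k + (j + 1) = (k + j) + 1 by omega]
    rcases this with h | h
    · right; linarith
    · left; linarith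
  set tpos := (Finset.range L).filter (fun j => g (j+1) - g j = m) with htpos
  have hsplit := Finset.sum_filter_add_sum_filter_not (Finset.range L)
    (fun j => g (j+1) - g j = m) (fun j => g (j+1) - g j)
  have h1 : ∑ j ∈ tpos, (g (j+1) - g j) = (tpos.card : ℝ) * m := by
    rw [Finset.sum_congr rfl (fun j hj => (Finset.mem_filter.1 hj).2)]
    rw [Finset.sum_const, nsmul_eq_mul]
  have h2 : ∑ j ∈ (Finset.range L).filter (fun j => ¬ (g (j+1) - g j = m)),
      (g (j+1) - g j) = (((Finset.range L).filter
        (fun j => ¬ (g (j+1) - g j = m))).card : ℝ) * (-m) := by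
    rw [Finset.sum_congr rfl (fun j hj => ?_), Finset.sum_const, nsmul_eq_mul]
    rcases hterm j with h | h
    · exact absurd h (Finset.mem_filter.1 hj).2
    · exact h
  have hcards : tpos.card + ((Finset.range L).filter
      (fun j => ¬ (g (j+1) - g j = m))).card = L := by
    rw [htpos]
    rw [Finset.card_filter_add_card_filter_not]
    exact Finset.card_range L
  have heq0 : (tpos.card : ℝ) * m + (((Finset.range L).filter
      (fun j => ¬ (g (j+1) - g j = m))).card : ℝ) * (-m) = 0 := by
    rw [← h1, ← h2, hsplit, htel]
  have hcc : tpos.card = ((Finset.range L).filter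
      (fun j => ¬ (g (j+1) - g j = m))).card := by
    have hmne : m ≠ 0 := ne_of_gt hm
    have : ((tpos.card : ℝ) - (((Finset.range L).filter
        (fun j => ¬ (g (j+1) - g j = m))).card : ℝ)) * m = 0 := by ring_nf; ring_nf at heq0; linarith
    rcases mul_eq_zero.1 this with h | h
    · have := sub_eq_zero.1 h
      exact_mod_cast this
    · exact absurd h hmne
  have hLeven : Even L := ⟨tpos.card, by omega⟩
  -- construct the cycle
  have hinjC : Function.Injective (fun j : Fin L => V (k + (j : ℕ))) := by
    intro a b hab
    by_contra hne
    have hvne : (a : ℕ) ≠ (b : ℕ) := fun h => hne (Fin.ext h)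
    rcases Nat.lt_or_ge (a : ℕ) (b : ℕ) with h | h
    · exact hVinj (k + a) (k + b) (by omega) (by have := b.isLt; omega) hab
    · have hba : (b : ℕ) < (a : ℕ) := by omega
      exact hVinj (k + b) (k + a) (by omega) (by have := a.isLt; omega) hab.symm
  set C : PreCycle (Fin d) :=
    ⟨L, by omega, fun j : Fin L => V (k + (j : ℕ)), fun _ => true, hinjC⟩ with hC
  refine ⟨C, hL3, hLeven, ?_⟩
  intro j
  have hnv := nxt_val (C := C) j
  by_cases hcase : (j : ℕ) + 1 = C.l
  · have hval : ((C.nxt j) : ℕ) = 0 := by rw [hnv, if_pos hcase]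
    have hcv : C.v (C.nxt j) = V k := by
      show V (k + ((C.nxt j) : ℕ)) = V k
      rw [hval, Nat.add_zero]
    rw [hcv]
    have hcase' : (j : ℕ) + 1 = L := hcase
    have hk1eq : k + (j : ℕ) + 1 = k1 := by omega
    have he := hedge (k + (j : ℕ))
    rw [hk1eq, ← hVeq] at he
    exact he
  · have hval : ((C.nxt j) : ℕ) = (j : ℕ) + 1 := by rw [hnv, if_neg hcase]
    have hcv : C.v (C.nxt j) = V (k + (j : ℕ) + 1) := by
      show V (k + ((C.nxt j) : ℕ)) = V (k + (j : ℕ) + 1)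
      rw [hval, ← Nat.add_assoc]
    rw [hcv]
    exact hedge (k + (j : ℕ))


lemma rho_inj {a b a' b' : Fin d} (hne : a ≠ b) (h : rho (a, b) = rho (a', b')) :
    a = a' ∧ b = b' := by
  have h1 : rho (a', b') a = 1 := by
    rw [← h]; simp [rho, hne]
  have h2 : rho (a', b') b = -1 := by
    rw [← h]; simp [rho, Ne.symm hne]
  obtain ⟨e1, -⟩ := rho_eval_one h1
  obtain ⟨e2, -⟩ := rho_eval_neg_one h2
  exact ⟨e1, e2⟩

lemma nxt_inj {C : PreCycle (Fin d)} : Function.Injective C.nxt := by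
  intro a b h
  have hv := congrArg Fin.val h
  rw [nxt_val, nxt_val] at hv
  have ha := a.isLt; have hb := b.isLt
  apply Fin.ext
  split_ifs at hv <;> omega

lemma nxt_nxt_ne {C : PreCycle (Fin d)} (hl3 : 3 ≤ C.l) (j : Fin C.l) :
    C.nxt (C.nxt j) ≠ j := by
  intro h
  have hv := congrArg Fin.val h
  rw [nxt_val, nxt_val] at hv
  have ha := j.isLt
  have hb := (C.nxt j).isLt
  rw [nxt_val] at hb
  split_ifs at hv hb <;> omega

theorem forward_dir {A : Finset (Fin d × Fin d)}
    (hconn : (SimpleGraph.fromRel (fun i j => (i, j) ∈ A)).Connected)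
    (hsym : ∀ i j : Fin d, (i, j) ∈ A → (j, i) ∈ A)
    (hec : HasEvenCycle A) : ¬ Simplicial (polyG A) := by
  classical
  obtain ⟨C, hl3, heven, hCA⟩ := hec
  intro hsimp
  set f : Fin d → ℝ := fun i => (fN A C i : ℝ) with hf
  -- both directions of every cycle edge are in A
  have hboth : ∀ j : Fin C.l, (C.v j, C.v (C.nxt j)) ∈ A ∧ (C.v (C.nxt j), C.v j) ∈ A := by
    intro j
    rcases hCA j with h | h
    · exact ⟨h, hsym _ _ h⟩
    · exact ⟨hsym _ _ h, h⟩
  -- bound on generators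
  have hle1 : ∀ y ∈ rho '' (A : Set (Fin d × Fin d)), lw f y ≤ 1 := by
    rintro y ⟨e, he, rfl⟩
    rw [lw_rho]
    have h1 : fN A C e.1 ≤ fN A C e.2 + 1 := fN_lip hconn he
    have : (fN A C e.1 : ℝ) ≤ (fN A C e.2 : ℝ) + 1 := by exact_mod_cast h1
    simp only [hf]; linarith
  have hmax : ∀ y ∈ polyG A, lw f y ≤ 1 := le_on_hull hle1
  -- tight edges have value 1
  have htight : ∀ e ∈ tightT A C, lw f (rho e) = 1 := by
    intro e he
    rw [tightT, Finset.mem_filter] at he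
    rw [lw_rho]
    have := he.2
    simp only [hf]
    have : (fN A C e.1 : ℝ) = (fN A C e.2 : ℝ) + 1 := by exact_mod_cast this.symm
    linarith
  -- the cycle's alternating vertices
  have j0 : Fin C.l := ⟨0, C.pos⟩
  -- the distinguished extreme points
  set xs : Fin C.l → (Fin d → ℝ) := fun j =>
    if Even ((j : ℕ)) then rho (C.v (C.nxt j), C.v j) else rho (C.v j, C.v (C.nxt j)) with hxs
  have hxs_arrow : ∀ j : Fin C.l, ∃ a b : Fin d, a ≠ b ∧ (a, b) ∈ A ∧ xs j = rho (a, b) ∧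
      f a = 1 ∧ f b = 0 := by
    intro j
    have hvne : C.v j ≠ C.v (C.nxt j) := fun h => nxt_ne j (C.inj h.symm)
    by_cases hj : Even ((j : ℕ))
    · refine ⟨C.v (C.nxt j), C.v j, Ne.symm hvne, (hboth j).2, by simp [hxs, hj], ?_, ?_⟩
      · simp only [hf]
        rw [fN_odd hconn hCA heven ((even_nxt heven j).not.2 (by simp [hj]))]
        norm_num
      · simp only [hf]; rw [fN_even hj]; norm_num
    · refine ⟨C.v j, C.v (C.nxt j), hvne, (hboth j).1, by simp [hxs, hj], ?_, ?_⟩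
      · simp only [hf]; rw [fN_odd hconn hCA heven hj]; norm_num
      · simp only [hf]; rw [fN_even ((even_nxt heven j).2 hj)]; norm_num
  have hxs_val : ∀ j, lw f (xs j) = 1 := by
    intro j
    obtain ⟨a, b, -, -, hx, h1, h0⟩ := hxs_arrow j
    rw [hx, lw_rho]
    simp [h1, h0]
  have hxs_polyG : ∀ j, xs j ∈ polyG A := by
    intro j
    obtain ⟨a, b, -, hA, hx, -, -⟩ := hxs_arrow j
    rw [hx]; exact mem_polyG_rho hA
  have hxs_ext : ∀ j, xs j ∈ (polyG A).extremePoints ℝ := by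
    intro j
    obtain ⟨a, b, hne, hA, hx, -, -⟩ := hxs_arrow j
    rw [hx]; exact rho_extremePoint hA hne
  -- the facet
  set F : Set (Fin d → ℝ) :=
    {x ∈ polyG A | ∀ y ∈ polyG A, lwC f y ≤ lwC f x} with hF
  have hFface : F = {x ∈ polyG A | lw f x = 1} := by
    ext x
    simp only [hF, Set.mem_setOf_eq]
    constructor
    · rintro ⟨hx, hmx⟩
      refine ⟨hx, le_antisymm (hmax x hx) ?_⟩
      have := hmx (xs j0) (hxs_polyG j0)
      rw [lwC_eq, lwC_eq, hxs_val j0] at this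
      exact this
    · rintro ⟨hx, h1⟩
      refine ⟨hx, fun y hy => ?_⟩
      rw [lwC_eq, lwC_eq, h1]
      exact hmax y hy
  have hxs_F : ∀ j, xs j ∈ F := by
    intro j
    rw [hFface]
    exact ⟨hxs_polyG j, hxs_val j⟩
  have hxs_extF : ∀ j, xs j ∈ F.extremePoints ℝ := by
    intro j
    refine extremePoint_mono ?_ (hxs_ext j) (hxs_F j)
    rw [hFface]; exact fun x hx => hx.1
  -- F is a facet
  have h2d : 2 ≤ d := by
    have hj1 : (⟨1, by omega⟩ : Fin C.l) ≠ ⟨0, C.pos⟩ := by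
      intro h; exact absurd (congrArg Fin.val h) (by simp)
    have := C.inj.ne hj1
    have h2 := (C.v (⟨1, by omega⟩ : Fin C.l)).isLt
    have h3 := (C.v (⟨0, C.pos⟩ : Fin C.l)).isLt
    have h4 : (C.v (⟨1, by omega⟩ : Fin C.l) : ℕ) ≠ (C.v (⟨0, C.pos⟩ : Fin C.l) : ℕ) :=
      fun hh => this (Fin.ext hh)
    omega
  have hfacet : IsFacetOf F (polyG A) := by
    refine ⟨fun _ => ⟨lwC f, rfl⟩, ⟨xs j0, hxs_F j0⟩, ?_⟩
    have hpF : pdim F = d - 2 := by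
      rw [hFface]
      exact finrank_vectorSpan_face (tightT_subset) htight
        (tightT_connected hconn hsym hCA heven)
        (f := f) (i0 := C.v ⟨0, C.pos⟩) (i1 := C.v ⟨1, by omega⟩)
        (by simp only [hf]; rw [fN_even (by simp)]; norm_num)
        (by simp only [hf]; rw [fN_odd hconn hCA heven (by simp [Nat.even_iff])]; norm_num)
    have hpP : pdim (polyG A) = d - 1 := finrank_vectorSpan_polyG hconn hsym
    rw [hpF, hpP]
    omega
  -- injectivity of xs
  have hxs_inj : Function.Injective xs := by
    intro a b hab
    by_cases hae : Even ((a : ℕ)) <;> by_cases hbe : Even ((b : ℕ))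
    · simp only [hxs, if_pos hae, if_pos hbe] at hab
      have hne : C.v (C.nxt a) ≠ C.v a := fun h => nxt_ne a (C.inj h)
      obtain ⟨-, h2⟩ := rho_inj hne hab
      exact C.inj h2
    · simp only [hxs, if_pos hae, if_neg hbe] at hab
      have hne : C.v (C.nxt a) ≠ C.v a := fun h => nxt_ne a (C.inj h)
      obtain ⟨h1, h2⟩ := rho_inj hne hab
      -- C.nxt a = b and a = C.nxt b
      have e1 : C.nxt a = b := C.inj h1
      have e2 : a = C.nxt b := C.inj h2
      exact absurd (by rw [← e2]; exact e1) (nxt_nxt_ne hl3 b)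
    · simp only [hxs, if_neg hae, if_pos hbe] at hab
      have hne : C.v a ≠ C.v (C.nxt a) := fun h => nxt_ne a (C.inj h.symm)
      obtain ⟨h1, h2⟩ := rho_inj hne hab
      have e1 : a = C.nxt b := C.inj h1
      have e2 : C.nxt a = b := C.inj h2
      exact absurd (by rw [← e1]; exact e2) (nxt_nxt_ne hl3 b)
    · simp only [hxs, if_neg hae, if_neg hbe] at hab
      have hne : C.v a ≠ C.v (C.nxt a) := fun h => nxt_ne a (C.inj h.symm)
      obtain ⟨h1, -⟩ := rho_inj hne hab
      exact C.inj h1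
  -- affine dependence
  have hAI := hsimp F hfacet
  set ψ : Fin C.l ↪ ↥(F.extremePoints ℝ) :=
    ⟨fun j => ⟨xs j, hxs_extF j⟩, fun a b h => hxs_inj (congrArg Subtype.val h)⟩ with hψ
  have hAI2 : AffineIndependent ℝ ((fun x : ↥(F.extremePoints ℝ) => (x : Fin d → ℝ)) ∘ ψ) :=
    hAI.comp_embedding ψ
  have hcomp : ((fun x : ↥(F.extremePoints ℝ) => (x : Fin d → ℝ)) ∘ ψ) = xs := rfl
  rw [hcomp] at hAI2
  rw [affineIndependent_iff] at hAI2
  -- weights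
  set w : Fin C.l → ℝ := fun j => (-1 : ℝ) ^ ((j : ℕ)) with hw
  have hwsum : ∑ j : Fin C.l, w j = 0 := by
    rw [Fin.sum_univ_eq_sum_range (fun k => (-1 : ℝ) ^ k)]
    rw [geom_sum_eq (by norm_num : (-1 : ℝ) ≠ 1)]
    rw [heven.neg_one_pow]
    norm_num
  have hbij : Function.Bijective (C.nxt) :=
    Finite.injective_iff_bijective.1 nxt_inj
  have hwdep : ∑ j : Fin C.l, w j • xs j = 0 := by
    have hterm : ∀ j : Fin C.l, w j • xs j = rho (C.v (C.nxt j), C.v j) := by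
      intro j
      by_cases hj : Even ((j : ℕ))
      · simp only [hw, hxs, if_pos hj, hj.neg_one_pow, one_smul]
      · have hodd : Odd ((j : ℕ)) := Nat.odd_iff.2 (Nat.not_even_iff.1 hj)
        simp only [hw, hxs, if_neg hj, hodd.neg_one_pow]
        rw [rho_swap (C.v j, C.v (C.nxt j))]
        simp
    simp_rw [hterm]
    funext k
    rw [Finset.sum_apply]
    simp only [rho]
    rw [Finset.sum_sub_distrib]
    have hre := hbij.sum_comp (fun j => if k = C.v j then (1 : ℝ) else 0)
    rw [hre]
    simp
  have := hAI2 Finset.univ w hwsum hwdep ⟨0, C.pos⟩ (Finset.mem_univ _)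
  simp [hw] at this

theorem backward_dir {A : Finset (Fin d × Fin d)}
    (hsym : ∀ i j : Fin d, (i, j) ∈ A → (j, i) ∈ A)
    (hnec : ¬ HasEvenCycle A) : Simplicial (polyG A) := by
  classical
  intro F hfacet
  obtain ⟨hexp, hFne, hdim⟩ := hfacet
  obtain ⟨ℓ, hFeq⟩ := hexp hFne
  set f : Fin d → ℝ := fun i => ℓ (eV i) with hf
  have hlf : ∀ x : Fin d → ℝ, ℓ x = lw f x := by
    intro x
    conv_lhs => rw [pi_eq_sum_eV x]
    rw [map_sum, lw_apply]
    refine Finset.sum_congr rfl fun i _ => ?_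
    rw [map_smul, smul_eq_mul, mul_comm]
  obtain ⟨x0, hx0⟩ := hFne
  set m : ℝ := lw f x0 with hm
  have hx0' := hx0
  rw [hFeq] at hx0'
  obtain ⟨hx0P, hx0max⟩ := hx0'
  have hFP : F ⊆ polyG A := by
    rw [hFeq]; exact fun x hx => hx.1
  have hm_ub : ∀ y ∈ polyG A, lw f y ≤ m := by
    intro y hy
    have := hx0max y hy
    rwa [hlf, hlf] at this
  have hvalF : ∀ x ∈ F, lw f x = m := by
    intro x hx
    have hx' := hx
    rw [hFeq] at hx'
    obtain ⟨hxP, hxmax⟩ := hx'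
    have h1 := hxmax x0 hx0P
    rw [hlf, hlf] at h1
    exact le_antisymm (hm_ub x hxP) h1
  have hFeq2 : F = {x ∈ polyG A | lw f x = m} := by
    ext x
    constructor
    · intro hx
      exact ⟨hFP hx, hvalF x hx⟩
    · rintro ⟨hxP, hxm⟩
      rw [hFeq]
      refine ⟨hxP, fun y hy => ?_⟩
      rw [hlf, hlf, hxm]
      exact hm_ub y hy
  have hFneP : F ≠ polyG A := by
    intro h
    rw [h] at hdim
    omega
  have hAne : ∃ e : Fin d × Fin d, e ∈ A := by
    by_contra h
    push_neg at h
    have : (A : Set (Fin d × Fin d)) = ∅ := by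
      ext e; simp [h e]
    rw [polyG, this] at hx0P
    simp at hx0P
  obtain ⟨e0, he0⟩ := hAne
  have hmpos : 0 < m := by
    rcases lt_or_ge 0 m with h | h
    · exact h
    · exfalso
      have hbnd : ∀ e ∈ A, lw f (rho e) = 0 := by
        have key : ∀ e ∈ A, lw f (rho e) ≤ m ∧ -(lw f (rho e)) ≤ m := by
          intro e he
          constructor
          · exact hm_ub _ (subset_convexHull ℝ _ ⟨e, he, rfl⟩)
          · have h2 : rho (e.2, e.1) = - rho e := rho_swap e
            have h3 := hm_ub (rho (e.2, e.1))
              (subset_convexHull ℝ _ ⟨(e.2, e.1), hsym e.1 e.2 he, rfl⟩)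
            rw [h2, map_neg] at h3
            exact h3
        have hm0 : m = 0 := by
          obtain ⟨ha, hb⟩ := key e0 he0
          linarith
        intro e he
        obtain ⟨ha, hb⟩ := key e he
        rw [hm0] at ha hb
        linarith
      have hall : ∀ y ∈ polyG A, lw f y = 0 := by
        refine eq_on_hull ?_
        rintro y ⟨e, he, rfl⟩
        exact hbnd e he
      apply hFneP
      rw [hFeq2]
      have hm0 : m = 0 := by
        rw [hm, hall x0 hx0P]
      ext x
      simp only [Set.mem_setOf_eq]
      constructor
      · exact fun h => h.1
      · intro hx
        exact ⟨hx, by rw [hall x hx, hm0]⟩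
  -- now prove affine independence
  rw [affineIndependent_iff]
  intro s w hw0 hcomb
  by_contra hnz
  push_neg at hnz
  obtain ⟨i0, hi0, hwi0⟩ := hnz
  apply hnec
  refine exists_even_cycle hmpos (f := f)
    (p := fun x : (F.extremePoints ℝ) => (x : Fin d → ℝ))
    Subtype.coe_injective (s := s) (w := w) ?_ ?_ hi0 hwi0
  · intro i _ _
    have hiext : (i : Fin d → ℝ) ∈ (polyG A).extremePoints ℝ := by
      refine extremePoints_face_subset hm_ub ?_
      rw [← hFeq2]
      exact i.prop
    have higen : (i : Fin d → ℝ) ∈ rho '' (A : Set (Fin d × Fin d)) := by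
      have := extremePoints_convexHull_subset (𝕜 := ℝ)
        (A := rho '' (A : Set (Fin d × Fin d)))
      exact this hiext
    obtain ⟨e, heA, heq⟩ := higen
    refine ⟨e, heA, heq.symm, ?_⟩
    have hiF : (i : Fin d → ℝ) ∈ F := extremePoints_subset i.prop
    have := hvalF _ hiF
    rw [← heq, lw_rho] at this
    exact this
  · intro a
    have := congrFun hcomb a
    rw [Finset.sum_apply] at this
    simpa using this

end Aux

/-- for a connected symmetric directed graph `G`, the polytope `P_G` is
simplicial iff the underlying undirected graph of `G` contains no even cycle. -/
theorem stmt14 {d : ℕ} (A : Finset (Fin d × Fin d)) (hconn : GConnected A)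
    (hsym : ∀ i j : Fin d, (i, j) ∈ A → (j, i) ∈ A) :
    Simplicial (polyG A) ↔ ¬ HasEvenCycle A := by
  constructor
  · intro hs hec
    exact forward_dir hconn hsym hec hs
  · intro h
    exact backward_dir hsym h
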